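/- arXiv:1802.05791 — 4 statements merged into one kernel-verified Lean document; each statement's English description precedes it below -/
import Mathlib

section
/- If F is a (1+ε)-sum approximation of f and G is a (1+ε)-sum approximation of g, then the convolution F ∗ G is a (1+ε)²-sum approximation of f ∗ g (for ε > 0). -/
/-- Prefix sum: `psum f x = ∑_{y ≤ x} f y`. -/
def psum (f : ℕ → ℕ) (x : ℕ) : ℕ := ∑ y ∈ Finset.range (x + 1), f y

/-- `F` is a `(1+ε)`-sum approximation of `f`:
`Σf(x) ≤ ΣF(x) ≤ (1+ε)·Σf(x)` for all `x`. -/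
def IsSumApprox (ε : ℝ) (F f : ℕ → ℕ) : Prop :=
  ∀ x, (psum f x : ℝ) ≤ psum F x ∧ (psum F x : ℝ) ≤ (1 + ε) * psum f x

/-- Convolution: `(f ∗ g)(w) = ∑_{x+y=w} f(x)·g(y)`. -/
def conv (f g : ℕ → ℕ) (w : ℕ) : ℕ := ∑ x ∈ Finset.range (w + 1), f x * g (w - x)

lemma conv_comm (f g : ℕ → ℕ) (w : ℕ) : conv f g w = conv g f w := by
  unfold conv
  rw [← Finset.sum_range_reflect]
  apply Finset.sum_congr rfl
  intro a ha
  simp only [Finset.mem_range] at ha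
  have h1 : w + 1 - 1 - a = w - a := by omega
  have h2 : w - (w - a) = a := by omega
  rw [h1, h2, Nat.mul_comm]

lemma psum_conv (f g : ℕ → ℕ) (x : ℕ) :
    psum (conv f g) x = ∑ a ∈ Finset.range (x + 1), f a * psum g (x - a) := by
  induction x with
  | zero => simp [psum, conv]
  | succ x ih =>
    rw [psum, Finset.sum_range_succ, ← psum, ih]
    rw [Finset.sum_range_succ (fun a => f a * psum g (x + 1 - a))]
    have h0 : x + 1 - (x + 1) = 0 := by omega
    rw [h0]
    have hsplit : ∀ a ∈ Finset.range (x + 1),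
        f a * psum g (x + 1 - a) = f a * psum g (x - a) + f a * g (x + 1 - a) := by
      intro a ha
      simp only [Finset.mem_range] at ha
      have : x + 1 - a = (x - a) + 1 := by omega
      rw [this, psum, Finset.sum_range_succ, ← psum, Nat.mul_add, ← this]
    rw [Finset.sum_congr rfl hsplit, Finset.sum_add_distrib]
    have : conv f g (x + 1)
        = ∑ a ∈ Finset.range (x + 1), f a * g (x + 1 - a) + f (x + 1) * g 0 := by
      rw [conv, Finset.sum_range_succ, Nat.sub_self]
    rw [this]
    simp [psum]
    ring

lemma psum_conv_le (c h H : ℕ → ℕ) (C : ℝ) (hC : 0 ≤ C)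
    (hb : ∀ n, (psum h n : ℝ) ≤ C * psum H n) (x : ℕ) :
    (psum (conv c h) x : ℝ) ≤ C * psum (conv c H) x := by
  rw [psum_conv, psum_conv]
  push_cast
  rw [Finset.mul_sum]
  apply Finset.sum_le_sum
  intro a _
  rw [mul_left_comm]
  exact mul_le_mul_of_nonneg_left (hb _) (Nat.cast_nonneg _)

lemma psum_conv_comm (f g : ℕ → ℕ) (x : ℕ) :
    psum (conv f g) x = psum (conv g f) x := by
  unfold psum
  exact Finset.sum_congr rfl fun a _ => conv_comm f g a

theorem sum_approx_conv (f g F G : ℕ → ℕ) (ε : ℝ) (hε : 0 < ε)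
    (hF : IsSumApprox ε F f) (hG : IsSumApprox ε G g) :
    ∀ x, (psum (conv f g) x : ℝ) ≤ psum (conv F G) x ∧
      (psum (conv F G) x : ℝ) ≤ (1 + ε) ^ 2 * psum (conv f g) x := by
  intro x
  have h1 : (0 : ℝ) ≤ 1 + ε := by linarith
  constructor
  · have s1 : (psum (conv f g) x : ℝ) ≤ psum (conv f G) x := by
      have := psum_conv_le f g G 1 zero_le_one (fun n => by
        simpa using (hG n).1) x
      simpa using this
    have s2 : (psum (conv G f) x : ℝ) ≤ psum (conv G F) x := by
      have := psum_conv_le G f F 1 zero_le_one (fun n => by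
        simpa using (hF n).1) x
      simpa using this
    rw [psum_conv_comm f G] at s1
    rw [psum_conv_comm G F] at s2
    push_cast at s1 s2 ⊢
    linarith
  · have s1 : (psum (conv G F) x : ℝ) ≤ (1 + ε) * psum (conv G f) x :=
      psum_conv_le G F f (1 + ε) h1 (fun n => (hF n).2) x
    have s2 : (psum (conv f G) x : ℝ) ≤ (1 + ε) * psum (conv f g) x :=
      psum_conv_le f G g (1 + ε) h1 (fun n => (hG n).2) x
    rw [psum_conv_comm F G]
    rw [psum_conv_comm G f] at s1
    have : (psum (conv G F) x : ℝ) ≤ (1 + ε) * ((1 + ε) * psum (conv f g) x) := by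
      calc (psum (conv G F) x : ℝ) ≤ (1 + ε) * psum (conv f G) x := s1
        _ ≤ (1 + ε) * ((1 + ε) * psum (conv f g) x) :=
          mul_le_mul_of_nonneg_left s2 h1
    nlinarith [this]
end

section
/- Let f, g, F, G : ℕ → ℕ satisfy Σf(x) ≤ ΣF(x) and Σg(x) ≤ ΣG(x) for all x. Then for every w, Σ(F ∗ G)(w) ≥ Σ(f ∗ g)(w). -/
lemma psum_succ (f : ℕ → ℕ) (n : ℕ) : psum f (n + 1) = psum f n + f (n + 1) := by
  simp [psum, Finset.sum_range_succ]

lemma psum_mono (f : ℕ → ℕ) : Monotone (psum f) := by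
  intro a b hab
  exact Finset.sum_le_sum_of_subset (Finset.range_subset_range.2 (by omega))

lemma psum_conv_eq (f g : ℕ → ℕ) (w : ℕ) :
    psum (conv f g) w = ∑ x ∈ Finset.range (w + 1), f x * psum g (w - x) := by
  induction w with
  | zero => simp [psum, conv]
  | succ n ih =>
      rw [psum_succ, ih]
      rw [Finset.sum_range_succ (f := fun x => f x * psum g (n + 1 - x))]
      have h1 : ∀ x ∈ Finset.range (n + 1),
          f x * psum g (n + 1 - x) = f x * psum g (n - x) + f x * g (n + 1 - x) := by
        intro x hx
        rw [Finset.mem_range] at hx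
        have : n + 1 - x = (n - x) + 1 := by omega
        rw [this, psum_succ, Nat.mul_add, ← this]
      rw [Finset.sum_congr rfl h1, Finset.sum_add_distrib]
      have : psum g (n + 1 - (n + 1)) = g 0 := by simp [psum]
      rw [this, conv, Finset.sum_range_succ (f := fun x => f x * g (n + 1 - x))]
      simp only [Nat.sub_self]
      ring

lemma abel_ineq (f F a : ℕ → ℕ) (hf : ∀ x, psum f x ≤ psum F x)
    (ha : ∀ x, a (x + 1) ≤ a x) (n : ℕ) :
    ∑ x ∈ Finset.range (n + 1), f x * a x ≤ ∑ x ∈ Finset.range (n + 1), F x * a x := by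
  have key : ∀ (h : ℕ → ℕ) (m : ℕ), ∑ x ∈ Finset.range (m + 1), h x * a x =
      (∑ x ∈ Finset.range m, psum h x * (a x - a (x + 1))) + psum h m * a m := by
    intro h m
    induction m with
    | zero => simp [psum]
    | succ k ihk =>
        rw [Finset.sum_range_succ (f := fun x => h x * a x), ihk,
          Finset.sum_range_succ (f := fun x => psum h x * (a x - a (x + 1))), psum_succ]
        have hk := ha k
        have : psum h k * (a k - a (k + 1)) + (psum h k + h (k + 1)) * a (k + 1)
            = psum h k * a k + h (k + 1) * a (k + 1) := by
          obtain ⟨d, hd⟩ := Nat.exists_eq_add_of_le hk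
          rw [hd]
          simp [Nat.add_sub_cancel_left]
          ring
        omega
  rw [key f n, key F n]
  gcongr with x hx
  · exact hf x
  · exact hf n

theorem psum_conv_mono (f g F G : ℕ → ℕ)
    (hF : ∀ x, psum f x ≤ psum F x) (hG : ∀ x, psum g x ≤ psum G x) :
    ∀ w, psum (conv f g) w ≤ psum (conv F G) w := by
  intro w
  rw [psum_conv_eq, psum_conv_eq]
  calc ∑ x ∈ Finset.range (w + 1), f x * psum g (w - x)
      ≤ ∑ x ∈ Finset.range (w + 1), f x * psum G (w - x) := by
        gcongr with x hx; exact hG _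
    _ ≤ ∑ x ∈ Finset.range (w + 1), F x * psum G (w - x) := by
        apply abel_ineq f F (fun x => psum G (w - x)) hF
        intro x
        exact psum_mono G (by omega)
end

section
/- Let S be a finite index set with weights w : S → ℕ, let a ∉ S, and let α > 0. If F is a (1+α)-sum approximation of k_S, then F + (F ▷ w(a)) is a (1+α)-sum approximation of k_{S ∪ {a}}. -/
/-- Shift of `f` by `w`: `(f▷w)(x) = f(x-w)` if `x ≥ w`, else `0`. -/
def shiftF (f : ℕ → ℕ) (w : ℕ) (x : ℕ) : ℕ := if w ≤ x then f (x - w) else 0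

/-- Knapsack counting function: `knap S w x` is the number of subsets
`T ⊆ S` with total weight `∑_{i∈T} w i = x`. -/
def knap {ι : Type*} [DecidableEq ι] (S : Finset ι) (w : ι → ℕ) (x : ℕ) : ℕ :=
  (S.powerset.filter (fun T => ∑ i ∈ T, w i = x)).card

lemma psum_add (f g : ℕ → ℕ) (x : ℕ) :
    psum (fun y => f y + g y) x = psum f x + psum g x := by
  unfold psum; rw [Finset.sum_add_distrib]

lemma psum_shift (f : ℕ → ℕ) (c x : ℕ) :
    psum (shiftF f c) x = if c ≤ x then psum f (x - c) else 0 := by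
  unfold psum shiftF
  split_ifs with h
  · rw [← Finset.sum_filter]
    have : Finset.filter (fun y => c ≤ y) (Finset.range (x + 1)) = Finset.Ico c (x + 1) := by
      ext y; simp [Finset.mem_Ico]; omega
    rw [this, Finset.sum_Ico_eq_sum_range]
    apply Finset.sum_congr (by congr 1; omega)
    intro i _; congr 1; omega
  · apply Finset.sum_eq_zero
    intro y hy
    simp only [Finset.mem_range] at hy
    rw [if_neg (by omega)]

lemma knap_insert {ι : Type*} [DecidableEq ι] (S : Finset ι) (w : ι → ℕ) (a : ι)
    (ha : a ∉ S) (x : ℕ) :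
    knap (insert a S) w x = knap S w x + shiftF (knap S w) (w a) x := by
  unfold knap shiftF
  rw [Finset.powerset_insert, Finset.filter_union, Finset.card_union_of_disjoint]
  · congr 1
    have hinj : Set.InjOn (insert a) ((S.powerset : Finset (Finset ι)) : Set (Finset ι)) := by
      intro T hT U hU hTU
      simp only [Finset.coe_powerset, Set.mem_preimage, Set.mem_powerset_iff,
        Finset.coe_subset] at hT hU
      have haT : a ∉ T := fun h' => ha (hT h')
      have haU : a ∉ U := fun h' => ha (hU h')
      have := congrArg (fun s => Finset.erase s a) hTU
      simpa [Finset.erase_insert haT, Finset.erase_insert haU] using this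
    split_ifs with h
    · rw [Finset.filter_image, Finset.card_image_of_injOn
        (hinj.mono (Finset.filter_subset _ _))]
      congr 1
      ext T
      simp only [Finset.mem_filter, Finset.mem_powerset]
      constructor
      · rintro ⟨hT, hs⟩
        have haT : a ∉ T := fun h' => ha (hT h')
        rw [Finset.sum_insert haT] at hs
        exact ⟨hT, by omega⟩
      · rintro ⟨hT, hs⟩
        have haT : a ∉ T := fun h' => ha (hT h')
        rw [Finset.sum_insert haT]
        exact ⟨hT, by omega⟩
    · rw [Finset.card_eq_zero, Finset.filter_eq_empty_iff]
      intro T hT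
      simp only [Finset.mem_image, Finset.mem_powerset] at hT
      obtain ⟨U, hU, rfl⟩ := hT
      have haU : a ∉ U := fun h' => ha (hU h')
      rw [Finset.sum_insert haU]
      omega
  · rw [Finset.disjoint_left]
    intro T hT hT'
    simp only [Finset.mem_filter, Finset.mem_powerset, Finset.mem_image] at hT hT'
    obtain ⟨⟨U, hU, rfl⟩, -⟩ := hT'
    exact ha (hT.1 (Finset.mem_insert_self a U))

theorem knap_insert_sum_approx {ι : Type*} [DecidableEq ι] (S : Finset ι)
    (w : ι → ℕ) (a : ι) (ha : a ∉ S) (α : ℝ) (hα : 0 < α) (F : ℕ → ℕ)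
    (hF : IsSumApprox α F (knap S w)) :
    IsSumApprox α (fun x => F x + shiftF F (w a) x) (knap (insert a S) w) := by
  intro x
  have hk : psum (knap (insert a S) w) x
      = psum (knap S w) x + psum (shiftF (knap S w) (w a)) x := by
    rw [← psum_add]
    apply Finset.sum_congr rfl
    intro y _
    exact knap_insert S w a ha y
  rw [hk, psum_add, psum_shift, psum_shift]
  obtain ⟨h1, h2⟩ := hF x
  split_ifs with h
  · obtain ⟨h3, h4⟩ := hF (x - w a)
    push_cast
    constructor
    · linarith
    · nlinarith
  · push_cast
    constructor <;> linarith
end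

section
/- Let ε ∈ (0, 1], let n be a positive integer with n·ε ≥ 1, let m be a natural number with 2^m ≤ √(n·ε), let c = √2/(√2 − 1), and for each i define δ_i = ε^{3/4} / (2c · 2^{i/2} · n^{1/4}). Then ∏_{i=0}^{m} (1 + δ_i)^{2^i} ≤ 1 + ε. -/
theorem delta_product_le (ε : ℝ) (hε : 0 < ε) (hε1 : ε ≤ 1)
    (n : ℕ) (hn : 0 < n) (hnε : 1 ≤ (n : ℝ) * ε)
    (m : ℕ) (hm : (2 : ℝ) ^ m ≤ Real.sqrt ((n : ℝ) * ε)) :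
    ∏ i ∈ Finset.range (m + 1),
      (1 + ε ^ (3 / 4 : ℝ) /
        (2 * (Real.sqrt 2 / (Real.sqrt 2 - 1)) * (Real.sqrt 2) ^ i *
          (n : ℝ) ^ (1 / 4 : ℝ))) ^ (2 ^ i) ≤ 1 + ε := by
  have hs2 : (1:ℝ) < Real.sqrt 2 := by
    rw [show (1:ℝ) = Real.sqrt 1 from (Real.sqrt_one).symm]
    exact Real.sqrt_lt_sqrt (by norm_num) (by norm_num)
  set s2 := Real.sqrt 2 with hs2def
  have hs2pos : 0 < s2 := by linarith
  have hs2sq : s2 * s2 = 2 := Real.mul_self_sqrt (by norm_num)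
  set c := s2 / (s2 - 1) with hcdef
  have hc : 0 < c := div_pos hs2pos (by linarith)
  have hnpos : (0:ℝ) < (n:ℝ) := Nat.cast_pos.mpr hn
  set N := (n:ℝ) ^ (1/4 : ℝ) with hNdef
  have hN : 0 < N := Real.rpow_pos_of_pos hnpos _
  set δ : ℕ → ℝ := fun i => ε ^ (3/4 : ℝ) / (2 * c * s2 ^ i * N) with hδdef
  have hεr : 0 < ε ^ (3/4 : ℝ) := Real.rpow_pos_of_pos hε _
  have hδpos : ∀ i, 0 < δ i := fun i =>
    div_pos hεr (by positivity)
  -- Step 1: each factor ≤ exp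
  have key : ∀ i, (1 + δ i) ^ (2 ^ i) ≤ Real.exp ((2:ℝ) ^ i * δ i) := by
    intro i
    have h1 : 1 + δ i ≤ Real.exp (δ i) := by
      have := Real.add_one_le_exp (δ i); linarith
    calc (1 + δ i) ^ (2 ^ i) ≤ (Real.exp (δ i)) ^ (2 ^ i) :=
          pow_le_pow_left₀ (by positivity) h1 _
      _ = Real.exp ((2:ℝ) ^ i * δ i) := by
          rw [← Real.exp_nat_mul]; push_cast; ring_nf
  -- Step 2: product ≤ exp of sum
  have hprod : ∏ i ∈ Finset.range (m + 1), (1 + δ i) ^ (2 ^ i)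
      ≤ Real.exp (∑ i ∈ Finset.range (m + 1), (2:ℝ) ^ i * δ i) := by
    rw [Real.exp_sum]
    exact Finset.prod_le_prod (fun i _ => by positivity) (fun i _ => key i)
  -- Step 3: bound the sum
  have h2i : ∀ i : ℕ, (2:ℝ) ^ i * δ i = s2 ^ i * (ε ^ (3/4 : ℝ) / (2 * c * N)) := by
    intro i
    have h2 : (2:ℝ) ^ i = s2 ^ i * s2 ^ i := by
      rw [← mul_pow, hs2sq]
    have hs2i : (s2:ℝ) ^ i ≠ 0 := by positivity
    rw [hδdef]
    field_simp
    rw [h2]; ring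
  have hsum : ∑ i ∈ Finset.range (m + 1), (2:ℝ) ^ i * δ i ≤ ε / 2 := by
    have hgeom : ∑ i ∈ Finset.range (m + 1), s2 ^ i = (s2 ^ (m+1) - 1) / (s2 - 1) :=
      geom_sum_eq (by linarith) _
    have hgeom_le : ∑ i ∈ Finset.range (m + 1), s2 ^ i ≤ c * s2 ^ m := by
      rw [hgeom, hcdef]
      rw [div_le_iff₀ (by linarith : (0:ℝ) < s2 - 1)]
      have : s2 ^ (m+1) = s2 * s2 ^ m := by ring
      rw [this]
      have h1 : s2 / (s2 - 1) * s2 ^ m * (s2 - 1) = s2 * s2 ^ m := by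
        field_simp
        rw [div_self (by linarith : s2 - 1 ≠ 0)]
      rw [h1]; linarith
    -- s2 ^ m ≤ ε^{1/4} * N
    have hs2m : s2 ^ m ≤ ε ^ (1/4 : ℝ) * N := by
      have h1 : s2 ^ m = Real.sqrt ((2:ℝ) ^ m) := by
        have : ((2:ℝ) ^ m) = (s2 ^ m) ^ 2 := by
          rw [← pow_mul, mul_comm m 2, pow_mul, pow_two, hs2sq]
        rw [this, Real.sqrt_sq (by positivity)]
      have h2 : Real.sqrt ((2:ℝ) ^ m) ≤ Real.sqrt (Real.sqrt ((n:ℝ) * ε)) :=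
        Real.sqrt_le_sqrt hm
      have h3 : Real.sqrt (Real.sqrt ((n:ℝ) * ε)) = ε ^ (1/4 : ℝ) * N := by
        have hnε0 : (0:ℝ) ≤ (n:ℝ) * ε := by positivity
        rw [Real.sqrt_eq_rpow, Real.sqrt_eq_rpow, ← Real.rpow_mul hnε0]
        norm_num
        rw [Real.mul_rpow hnpos.le hε.le, hNdef]
        ring
      rw [h1]; rw [h3] at h2; exact h2
    calc ∑ i ∈ Finset.range (m + 1), (2:ℝ) ^ i * δ i
        = (∑ i ∈ Finset.range (m + 1), s2 ^ i) * (ε ^ (3/4 : ℝ) / (2 * c * N)) := by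
          rw [Finset.sum_mul]; exact Finset.sum_congr rfl (fun i _ => h2i i)
      _ ≤ (c * s2 ^ m) * (ε ^ (3/4 : ℝ) / (2 * c * N)) := by
          apply mul_le_mul_of_nonneg_right hgeom_le (by positivity)
      _ ≤ (c * (ε ^ (1/4 : ℝ) * N)) * (ε ^ (3/4 : ℝ) / (2 * c * N)) := by
          apply mul_le_mul_of_nonneg_right _ (by positivity)
          exact mul_le_mul_of_nonneg_left hs2m hc.le
      _ = ε ^ (1/4 : ℝ) * ε ^ (3/4 : ℝ) / 2 := by
          field_simp
      _ = ε / 2 := by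
          rw [← Real.rpow_add hε]; norm_num
  -- Step 4: exp (ε/2) ≤ 1 + ε
  have hexp : Real.exp (ε / 2) ≤ 1 + ε := by
    have h1 : 1 - ε/2 ≤ Real.exp (-(ε/2)) := by
      have := Real.add_one_le_exp (-(ε/2)); linarith
    have h2 : Real.exp (ε/2) * Real.exp (-(ε/2)) = 1 := by
      rw [← Real.exp_add]; norm_num
    nlinarith [Real.exp_pos (ε/2), Real.exp_pos (-(ε/2))]
  calc ∏ i ∈ Finset.range (m + 1), (1 + δ i) ^ (2 ^ i)
      ≤ Real.exp (∑ i ∈ Finset.range (m + 1), (2:ℝ) ^ i * δ i) := hprod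
    _ ≤ Real.exp (ε / 2) := Real.exp_le_exp.mpr hsum
    _ ≤ 1 + ε := hexp
end
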